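/- For all positive integers m, n and every BQAP1 instance (q, c, d), the number of feasible solutions (σ,τ) with f1(σ,τ) ≥ A1(q,c,d) is at least n^{m-1}·m^{n-1}. -/

import Mathlib

/-- Objective function of BQAP1. -/
noncomputable def f1 {m n : ℕ} (q : Fin m → Fin n → Fin m → Fin n → ℝ)
    (c d : Fin m → Fin n → ℝ) (σ : Fin m → Fin n) (τ : Fin n → Fin m) : ℝ :=
  (∑ i, ∑ l, q i (σ i) (τ l) l) + (∑ i, c i (σ i)) + (∑ l, d (τ l) l)

/-- Average objective value of BQAP1. -/
noncomputable def A1 {m n : ℕ} (q : Fin m → Fin n → Fin m → Fin n → ℝ)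
    (c d : Fin m → Fin n → ℝ) : ℝ :=
  (1 / ((m : ℝ) * n)) * (∑ i, ∑ j, ∑ k, ∑ l, q i j k l)
    + (1 / (n : ℝ)) * (∑ i, ∑ j, c i j)
    + (1 / (m : ℝ)) * (∑ i, ∑ j, d i j)

private lemma sum_shift_eq {k : ℕ} [NeZero k] (g : Fin k → ℝ) (j : Fin k) :
    ∑ a : Fin k, g (j + a) = ∑ a, g a :=
  Fintype.sum_equiv (Equiv.addLeft j) _ _ (fun _ => rfl)

private lemma orbit_sum {m n : ℕ} [NeZero m] [NeZero n]
    (q : Fin m → Fin n → Fin m → Fin n → ℝ) (c d : Fin m → Fin n → ℝ)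
    (σ : Fin m → Fin n) (τ : Fin n → Fin m) :
    ∑ a : Fin n, ∑ b : Fin m,
        f1 q c d (fun i => σ i + a) (fun l => τ l + b)
      = ((m : ℝ) * n) * A1 q c d := by
  have hm : (m : ℝ) ≠ 0 := Nat.cast_ne_zero.mpr (NeZero.ne m)
  have hn : (n : ℝ) ≠ 0 := Nat.cast_ne_zero.mpr (NeZero.ne n)
  have hQ : ∑ a : Fin n, ∑ b : Fin m, ∑ i, ∑ l, q i (σ i + a) (τ l + b) l
      = ∑ i, ∑ j, ∑ k, ∑ l, q i j k l := by
    have step1 : ∀ a : Fin n, ∑ b : Fin m, ∑ i, ∑ l, q i (σ i + a) (τ l + b) l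
        = ∑ i, ∑ l, ∑ k, q i (σ i + a) k l := by
      intro a
      rw [Finset.sum_comm]
      refine Finset.sum_congr rfl fun i _ => ?_
      rw [Finset.sum_comm]
      refine Finset.sum_congr rfl fun l _ => ?_
      exact sum_shift_eq (fun k => q i (σ i + a) k l) (τ l)
    simp only [step1]
    rw [Finset.sum_comm]
    refine Finset.sum_congr rfl fun i _ => ?_
    have step2 : ∑ a : Fin n, ∑ l, ∑ k, q i (σ i + a) k l
        = ∑ j, ∑ l, ∑ k, q i j k l :=
      sum_shift_eq (fun j => ∑ l, ∑ k, q i j k l) (σ i)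
    rw [step2]
    refine Finset.sum_congr rfl fun j _ => Finset.sum_comm
  have hC : ∑ a : Fin n, ∑ b : Fin m, ∑ i, c i (σ i + a)
      = (m : ℝ) * ∑ i, ∑ j, c i j := by
    have : ∀ a : Fin n, ∑ b : Fin m, ∑ i, c i (σ i + a)
        = (m : ℝ) * ∑ i, c i (σ i + a) := by
      intro a
      rw [Finset.sum_const, Finset.card_univ, Fintype.card_fin, nsmul_eq_mul]
    simp only [this]
    rw [← Finset.mul_sum, Finset.sum_comm]
    congr 1
    exact Finset.sum_congr rfl fun i _ => sum_shift_eq (fun j => c i j) (σ i)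
  have hD : ∑ a : Fin n, ∑ b : Fin m, ∑ l, d (τ l + b) l
      = (n : ℝ) * ∑ i, ∑ j, d i j := by
    have h1 : ∀ a : Fin n, ∑ b : Fin m, ∑ l, d (τ l + b) l
        = ∑ l, ∑ k, d k l := by
      intro a
      rw [Finset.sum_comm]
      exact Finset.sum_congr rfl fun l _ => sum_shift_eq (fun k => d k l) (τ l)
    rw [Finset.sum_congr rfl fun a _ => h1 a]
    rw [Finset.sum_const, Finset.card_univ, Fintype.card_fin, nsmul_eq_mul]
    congr 1
    exact Finset.sum_comm
  simp only [f1, Finset.sum_add_distrib]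
  rw [hQ, hC, hD, A1]
  field_simp

theorem domination_BQAP1 (m n : ℕ) (hm : 0 < m) (hn : 0 < n)
    (q : Fin m → Fin n → Fin m → Fin n → ℝ) (c d : Fin m → Fin n → ℝ) :
    n ^ (m - 1) * m ^ (n - 1) ≤
      {στ : (Fin m → Fin n) × (Fin n → Fin m) |
        f1 q c d στ.1 στ.2 ≥ A1 q c d}.ncard := by
  haveI : NeZero m := ⟨hm.ne'⟩
  haveI : NeZero n := ⟨hn.ne'⟩
  set S : Set ((Fin m → Fin n) × (Fin n → Fin m)) :=
    {στ | f1 q c d στ.1 στ.2 ≥ A1 q c d} with hS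
  -- key existence of a good shift
  have key : ∀ p : (Fin m → Fin n) × (Fin n → Fin m),
      ∃ ab : Fin n × Fin m,
        f1 q c d (fun i => p.1 i + ab.1) (fun l => p.2 l + ab.2) ≥ A1 q c d := by
    intro p
    by_contra hcon
    push_neg at hcon
    have hlt : ∑ a : Fin n, ∑ b : Fin m,
        f1 q c d (fun i => p.1 i + a) (fun l => p.2 l + b)
        < ∑ a : Fin n, ∑ b : Fin m, A1 q c d := by
      refine Finset.sum_lt_sum_of_nonempty Finset.univ_nonempty fun a _ => ?_
      refine Finset.sum_lt_sum_of_nonempty Finset.univ_nonempty fun b _ => ?_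
      exact hcon (a, b)
    rw [orbit_sum q c d p.1 p.2] at hlt
    simp only [Finset.sum_const, Finset.card_univ, Fintype.card_fin,
      nsmul_eq_mul, ← mul_assoc] at hlt
    rw [mul_comm (n : ℝ) (m : ℝ)] at hlt
    exact lt_irrefl _ hlt
  choose ab hab using key
  set F : (Fin m → Fin n) × (Fin n → Fin m) → (Fin m → Fin n) × (Fin n → Fin m) :=
    fun p => (fun i => p.1 i + (ab p).1, fun l => p.2 l + (ab p).2) with hF
  set R : Set ((Fin m → Fin n) × (Fin n → Fin m)) :=
    {p | p.1 0 = 0 ∧ p.2 0 = 0} with hRdef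
  have himg : F '' R ⊆ S := by
    rintro _ ⟨p, -, rfl⟩
    exact hab p
  have hinj : Set.InjOn F R := by
    rintro p hp p' hp' hpp
    have h1 : (fun i => p.1 i + (ab p).1) = fun i => p'.1 i + (ab p').1 :=
      congrArg Prod.fst hpp
    have h2 : (fun l => p.2 l + (ab p).2) = fun l => p'.2 l + (ab p').2 :=
      congrArg Prod.snd hpp
    have ha : (ab p).1 = (ab p').1 := by
      have := congrFun h1 0
      rwa [hp.1, hp'.1, zero_add, zero_add] at this
    have hb : (ab p).2 = (ab p').2 := by
      have := congrFun h2 0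
      rwa [hp.2, hp'.2, zero_add, zero_add] at this
    have e1 : p.1 = p'.1 := by
      funext i
      have := congrFun h1 i
      rw [ha] at this
      exact add_right_cancel this
    have e2 : p.2 = p'.2 := by
      funext l
      have := congrFun h2 l
      rw [hb] at this
      exact add_right_cancel this
    exact Prod.ext e1 e2
  have hcard : R.ncard = n ^ (m - 1) * m ^ (n - 1) := by
    rw [← Nat.card_coe_set_eq, Nat.card_eq_fintype_card]
    have e0 : ↥R ≃ {σ : Fin m → Fin n // σ 0 = 0} × {τ : Fin n → Fin m // τ 0 = 0} :=
      (Equiv.subtypeEquivRight (fun c => Iff.rfl)).trans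
        (Equiv.subtypeProdEquivProd
          (p := fun σ : Fin m → Fin n => σ 0 = 0) (q := fun τ : Fin n → Fin m => τ 0 = 0))
    have eσ : {σ : Fin m → Fin n // σ 0 = 0} ≃ ({i : Fin m // i ≠ 0} → Fin n) := by
      refine ⟨fun σ i => σ.1 i.1, fun g => ⟨fun i => if h : i = 0 then 0 else g ⟨i, h⟩, by simp⟩,
        ?_, ?_⟩
      · intro σ
        ext i
        by_cases h : i = (0 : Fin m) <;> simp [h, σ.2]
      · intro g
        ext i
        simp [i.2]
    have eτ : {τ : Fin n → Fin m // τ 0 = 0} ≃ ({l : Fin n // l ≠ 0} → Fin m) := by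
      refine ⟨fun τ l => τ.1 l.1, fun g => ⟨fun l => if h : l = 0 then 0 else g ⟨l, h⟩, by simp⟩,
        ?_, ?_⟩
      · intro τ
        ext l
        by_cases h : l = (0 : Fin n) <;> simp [h, τ.2]
      · intro g
        ext l
        simp [l.2]
    have cm : Fintype.card {i : Fin m // i ≠ 0} = m - 1 := by
      rw [Fintype.card_subtype_compl, Fintype.card_subtype_eq, Fintype.card_fin]
    have cn : Fintype.card {l : Fin n // l ≠ 0} = n - 1 := by
      rw [Fintype.card_subtype_compl, Fintype.card_subtype_eq, Fintype.card_fin]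
    rw [Fintype.card_congr (e0.trans (Equiv.prodCongr eσ eτ)), Fintype.card_prod,
      Fintype.card_fun, Fintype.card_fun, cm, cn, Fintype.card_fin, Fintype.card_fin]
  calc n ^ (m - 1) * m ^ (n - 1) = R.ncard := hcard.symm
    _ = (F '' R).ncard := (Set.ncard_image_of_injOn hinj).symm
    _ ≤ S.ncard := Set.ncard_le_ncard himg (Set.toFinite S)
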